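/- Every symmetric convex polygon in the plane (centrally symmetric with respect to the origin) is a finite Minkowski sum of centrally symmetric segments. -/

import Mathlib

open Pointwise

/-- 2D cross product. -/
def cr (u w : ℝ × ℝ) : ℝ := u.1 * w.2 - u.2 * w.1

@[simp] lemma vec6_val_four {α : Type*} (a b c d e f : α) : ![a,b,c,d,e,f] 4 = e := rfl
@[simp] lemma vec6_val_five {α : Type*} (a b c d e f : α) : ![a,b,c,d,e,f] 5 = f := rfl

lemma openSegment_neg_mem {z x y : ℝ × ℝ} (h : z ∈ openSegment ℝ x y) :
    -z ∈ openSegment ℝ (-x) (-y) := by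
  obtain ⟨α, β, hα, hβ, hs, he⟩ := h
  exact ⟨α, β, hα, hβ, hs, by rw [← he]; module⟩

lemma extremePoints_neg_mem {P : Set (ℝ × ℝ)} (hsym : -P = P) {x : ℝ × ℝ}
    (hx : x ∈ P.extremePoints ℝ) : -x ∈ P.extremePoints ℝ := by
  rw [mem_extremePoints] at hx ⊢
  refine ⟨by rw [← hsym]; exact Set.neg_mem_neg.2 hx.1, ?_⟩
  intro y₁ h₁ y₂ h₂ hseg
  have h₁' : -y₁ ∈ P := by rw [← hsym]; exact Set.neg_mem_neg.2 h₁
  have h₂' : -y₂ ∈ P := by rw [← hsym]; exact Set.neg_mem_neg.2 h₂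
  have := hx.2 (-y₁) h₁' (-y₂) h₂' (by simpa using openSegment_neg_mem hseg)
  constructor
  · have := this.1; rw [neg_eq_iff_eq_neg] at this; rw [this]
  · have := this.2; rw [neg_eq_iff_eq_neg] at this; rw [this]

lemma extremePoints_mono' {P Q : Set (ℝ × ℝ)} (hQP : Q ⊆ P) {x : ℝ × ℝ}
    (hx : x ∈ P.extremePoints ℝ) (hxQ : x ∈ Q) : x ∈ Q.extremePoints ℝ :=
  ⟨hxQ, fun _ h₁ _ h₂ hs => hx.2 (hQP h₁) (hQP h₂) hs⟩

/-- If `cr a b = 0` and `a ≠ 0` then `b` is a multiple of `a`. -/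
lemma cr_eq_zero_imp {a b : ℝ × ℝ} (h : cr a b = 0) (ha : a ≠ 0) : ∃ t : ℝ, b = t • a := by
  simp only [cr] at h
  by_cases h1 : a.1 ≠ 0
  · refine ⟨b.1 / a.1, ?_⟩
    apply Prod.ext <;> simp <;> field_simp
    linarith
  · push_neg at h1
    have h2 : a.2 ≠ 0 := by intro h2; exact ha (Prod.ext h1 h2)
    have hb1 : b.1 = 0 := by
      have : a.2 * b.1 = 0 := by rw [h1] at h; linarith
      exact (mul_eq_zero.1 this).resolve_left h2
    refine ⟨b.2 / a.2, ?_⟩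
    apply Prod.ext <;> simp [h1, hb1] <;> field_simp

/-- No three distinct extreme points are collinear. -/
lemma extreme_not_collinear {P : Set (ℝ × ℝ)} {a x y : ℝ × ℝ}
    (ha : a ∈ P.extremePoints ℝ) (hx : x ∈ P.extremePoints ℝ) (hy : y ∈ P.extremePoints ℝ)
    (hax : x ≠ a) (hay : y ≠ a) (hxy : y ≠ x) (h : cr (x - a) (y - a) = 0) : False := by
  have hd : x - a ≠ 0 := sub_ne_zero.2 hax
  obtain ⟨t, ht⟩ := cr_eq_zero_imp h hd
  have hy' : y = a + t • (x - a) := by rw [← ht]; abel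
  have ht0 : t ≠ 0 := by rintro rfl; apply hay; rw [hy']; module
  have ht1 : t ≠ 1 := by rintro rfl; apply hxy; rw [hy']; module
  rcases lt_trichotomy t 0 with htn | htz | htp
  · have h1t : (0:ℝ) < 1 - t := by linarith
    have h1t' : (1:ℝ) - t ≠ 0 := ne_of_gt h1t
    have hmem : a ∈ openSegment ℝ x y := by
      refine ⟨-t / (1 - t), 1 / (1 - t), div_pos (by linarith) h1t, div_pos one_pos h1t, ?_, ?_⟩
      · field_simp; ring
      · rw [hy']; apply Prod.ext <;> simp <;> field_simp [h1t'] <;> ring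
    exact hax (ha.2 hx.1 hy.1 hmem)
  · exact ht0 htz
  · rcases lt_trichotomy t 1 with htl | h1 | htg
    · have hmem : y ∈ openSegment ℝ a x := by
        refine ⟨1 - t, t, by linarith, htp, by ring, ?_⟩
        rw [hy']; apply Prod.ext <;> simp <;> ring
      exact hay (hy.2 ha.1 hx.1 hmem).symm
    · exact ht1 h1
    · have htp' : t ≠ 0 := ne_of_gt htp
      have hmem : x ∈ openSegment ℝ a y := by
        refine ⟨1 - 1 / t, 1 / t, by rw [sub_pos]; exact (div_lt_one htp).2 htg,
          by positivity, by ring, ?_⟩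
        rw [hy']; apply Prod.ext <;> simp <;> field_simp <;> ring
      exact hax (hx.2 ha.1 hy.1 hmem).symm

/-- Cramer coordinates. -/
lemma cr_coords {a b : ℝ × ℝ} (hd : cr a b ≠ 0) (x : ℝ × ℝ) :
    (cr x b / cr a b) • a + (cr a x / cr a b) • b = x := by
  simp only [cr] at hd ⊢
  have hd' : b.2 * a.1 - b.1 * a.2 ≠ 0 := by contrapose! hd; linarith
  apply Prod.ext <;> simp <;> field_simp <;> ring

/-- Membership of a small symmetric combination in a convex symmetric set. -/
lemma combo_mem {P : Set (ℝ × ℝ)} (hP : Convex ℝ P) {p q x : ℝ × ℝ}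
    (hp : p ∈ P) (hp' : -p ∈ P) (hq : q ∈ P) (hq' : -q ∈ P) (hx : x ∈ P) (hx' : -x ∈ P)
    {A B C : ℝ} (h : |A| + |B| + |C| ≤ 1) : A • p + B • q + C • x ∈ P := by
  set lam := 1 - (|A| + |B| + |C|) with hlam
  have hlam0 : 0 ≤ lam := by simp only [hlam]; linarith
  have h1 : max A 0 + max (-A) 0 = |A| := max_zero_add_max_neg_zero_eq_abs_self A
  have h2 : max B 0 + max (-B) 0 = |B| := max_zero_add_max_neg_zero_eq_abs_self B
  have h3 : max C 0 + max (-C) 0 = |C| := max_zero_add_max_neg_zero_eq_abs_self C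
  have hA : max A 0 - max (-A) 0 = A := max_zero_sub_max_neg_zero_eq_self A
  have hB : max B 0 - max (-B) 0 = B := max_zero_sub_max_neg_zero_eq_self B
  have hC : max C 0 - max (-C) 0 = C := max_zero_sub_max_neg_zero_eq_self C
  have key := hP.sum_mem (t := (Finset.univ : Finset (Fin 6)))
    (w := ![max A 0, max (-A) 0, max B 0, max (-B) 0, max C 0 + lam/2, max (-C) 0 + lam/2])
    (z := ![p, -p, q, -q, x, -x])
    (by intro i _; fin_cases i <;> simp [Matrix.cons_val_succ] <;> positivity)
    (by simp [Fin.sum_univ_succ, Matrix.cons_val_succ]; linarith)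
    (by intro i _; fin_cases i <;> simp [Matrix.cons_val_succ, hp, hp', hq, hq', hx, hx'])
  simp only [Fin.sum_univ_succ, Fin.sum_univ_zero, Matrix.cons_val_zero, Matrix.cons_val_succ,
    add_zero] at key
  convert key using 1
  apply Prod.ext
  · simp
    linear_combination (-p.1) * hA - q.1 * hB - x.1 * hC
  · simp
    linear_combination (-p.2) * hA - q.2 * hB - x.2 * hC

/-- The key scalar inequality. -/
lemma rexists {ξ η : ℝ} (hξ : ξ < 0) (hη : 0 < η) (hsum : |ξ + η| ≤ 1) (hdiff : 1 ≤ η - ξ) :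
    ∃ r : ℝ, |1 + r * ξ| + |r * η - 1| + |1 - r| ≤ 1 := by
  rcases le_or_gt 0 (ξ + η) with hc | hc
  · refine ⟨1 / η, ?_⟩
    have e1 : 1 + (1/η) * ξ = (η + ξ) / η := by field_simp
    have e2 : (1/η) * η - 1 = 0 := by field_simp; ring
    have e3 : 1 - 1/η = (η - 1) / η := by field_simp
    rw [e1, e2, e3, abs_zero, abs_div, abs_div, abs_of_pos hη, add_zero, ← add_div,
      div_le_one hη]
    rcases abs_cases (η + ξ) with ⟨h4, _⟩ | ⟨h4, _⟩ <;>
      rcases abs_cases (η - 1) with ⟨h5, _⟩ | ⟨h5, _⟩ <;>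
      rcases abs_cases (ξ + η) with ⟨h6, h6'⟩ | ⟨h6, h6'⟩ <;> linarith
  · refine ⟨-1 / ξ, ?_⟩
    have hξ' : ξ ≠ 0 := ne_of_lt hξ
    have e1 : 1 + (-1/ξ) * ξ = 0 := by field_simp; ring
    have e2 : (-1/ξ) * η - 1 = -((η + ξ) / ξ) := by field_simp; ring
    rw [e1, abs_zero, zero_add, show (1:ℝ) - -1/ξ = (ξ+1)/ξ by field_simp; ring, e2, abs_neg, abs_div,
      abs_div, abs_of_neg hξ, ← add_div, div_le_one (by linarith : (0:ℝ) < -ξ)]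
    rcases abs_cases (η + ξ) with ⟨h4, _⟩ | ⟨h4, _⟩ <;>
      rcases abs_cases (ξ + 1) with ⟨h5, _⟩ | ⟨h5, _⟩ <;>
      rcases abs_cases (ξ + η) with ⟨h6, h6'⟩ | ⟨h6, h6'⟩ <;> linarith

lemma neg_self_zero {z : ℝ × ℝ} (h : -z = z) : z = 0 := by
  have h1 := congrArg Prod.fst h
  have h2 := congrArg Prod.snd h
  simp at h1 h2
  exact Prod.ext (by simp; linarith) (by simp; linarith)

set_option maxHeartbeats 2000000 in
lemma key_ind : ∀ (n : ℕ) (S : Set (ℝ × ℝ)), S.Finite → S.ncard ≤ n →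
    ∀ P : Set (ℝ × ℝ), P = convexHull ℝ S → -P = P → P.Nonempty →
    ∃ (k : ℕ) (v : Fin k → ℝ × ℝ), P = ∑ i : Fin k, segment ℝ (-(v i)) (v i) := by
  intro n
  induction n with
  | zero =>
    intro S hSfin hScard P hP hsym hne
    have hS0 : S = ∅ := by rw [← Set.ncard_eq_zero hSfin]; omega
    rw [hS0, convexHull_empty] at hP
    exact absurd hP hne.ne_empty
  | succ n IH =>
    intro S hSfin hScard P hP hsym hne
    classical
    set E := P.extremePoints ℝ with hEdef
    have hPconv : Convex ℝ P := hP ▸ convex_convexHull ℝ S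
    have hPcomp : IsCompact P := hP ▸ hSfin.isCompact_convexHull ℝ
    have hES : E ⊆ S := by rw [hEdef, hP]; exact extremePoints_convexHull_subset
    have hEfin : E.Finite := hSfin.subset hES
    have hPE : P = convexHull ℝ E := by
      conv_lhs => rw [← closure_convexHull_extremePoints hPcomp hPconv]
      exact (hEfin.isClosed_convexHull ℝ).closure_eq
    have hEP : E ⊆ P := extremePoints_subset
    have hEsymm : ∀ x, x ∈ E → -x ∈ E := fun x hx => extremePoints_neg_mem hsym hx
    have hnegmem : ∀ y ∈ P, -y ∈ P := by
      intro y hy; rw [← hsym]; exact Set.neg_mem_neg.2 hy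
    have hEne : E.Nonempty := by
      rcases Set.eq_empty_or_nonempty E with h | h
      · rw [h, convexHull_empty] at hPE; exact absurd hPE hne.ne_empty
      · exact h
    rcases lt_or_ge E.ncard 3 with hsmall | hbig
    · -- at most two extreme points
      obtain ⟨z, hz⟩ := hEne
      have hzsub : E ⊆ {z, -z} := by
        intro w hw
        by_contra hwmem
        simp only [Set.mem_insert_iff, Set.mem_singleton_iff, not_or] at hwmem
        obtain ⟨hwz, hwnz⟩ := hwmem
        by_cases hz0 : z = 0
        · have hw0 : w ≠ 0 := by rw [← hz0]; exact hwz
          have h3 : ({w, -w, z} : Set _) ⊆ E := by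
            intro y hy
            rcases hy with rfl | hy
            · exact hw
            rcases hy with rfl | hy
            · exact hEsymm w hw
            · rw [hy]; exact hz
          have hwa : w ≠ -w := fun hh => hw0 (neg_self_zero hh.symm)
          have hcard : ({w, -w, z} : Set _).ncard = 3 := by
            rw [Set.ncard_insert_of_notMem (by
              simp only [Set.mem_insert_iff, Set.mem_singleton_iff, not_or]
              exact ⟨hwa, by rw [hz0]; exact hw0⟩),
              Set.ncard_pair (by rw [hz0]; intro hh; exact hw0 (neg_eq_zero.1 hh))]
          have := Set.ncard_le_ncard h3 hEfin
          omega
        · have hzz : z ≠ -z := fun hh => hz0 (neg_self_zero hh.symm)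
          have h3 : ({z, -z, w} : Set _) ⊆ E := by
            intro y hy
            rcases hy with rfl | hy
            · exact hz
            rcases hy with rfl | hy
            · exact hEsymm z hz
            · rw [hy]; exact hw
          have hcard : ({z, -z, w} : Set _).ncard = 3 := by
            rw [Set.ncard_insert_of_notMem (by
              simp only [Set.mem_insert_iff, Set.mem_singleton_iff, not_or]
              exact ⟨hzz, fun hh => hwz hh.symm⟩),
              Set.ncard_pair (fun hh => hwnz hh.symm)]
          have := Set.ncard_le_ncard h3 hEfin
          omega
      by_cases hz0 : z = 0
      · have hE1 : E = {0} := by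
          apply Set.Subset.antisymm
          · intro w hw
            have := hzsub hw
            rw [hz0] at this
            simpa using this
          · intro w hw
            rw [Set.mem_singleton_iff] at hw
            rw [hw, ← hz0]; exact hz
        refine ⟨0, fun i => i.elim0, ?_⟩
        rw [hPE, hE1, convexHull_singleton]
        simp only [Finset.univ_eq_empty, Finset.sum_empty]
        rfl
      · have hmz : -z ∈ E := hEsymm z hz
        have hE2 : E = {z, -z} := by
          apply Set.Subset.antisymm hzsub
          intro w hw
          rcases hw with rfl | hw
          · exact hz
          · rw [Set.mem_singleton_iff] at hw; rw [hw]; exact hmz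
        refine ⟨1, fun _ => z, ?_⟩
        rw [hPE, hE2]
        rw [Fin.sum_univ_one, ← convexHull_pair]
        congr 1
        rw [Set.pair_comm]
    · -- main case : at least three extreme points
      obtain ⟨a, haE⟩ := hEne
      have hAne : (E \ {a}).Nonempty := by
        rw [Set.diff_nonempty]
        intro hsub
        have := Set.ncard_le_ncard hsub (Set.finite_singleton a)
        simp [Set.ncard_singleton] at this
        omega
      have hAfin : (E \ {a}).Finite := hEfin.subset Set.diff_subset
      have ha_not : a ∉ convexHull ℝ (E \ {a}) := by
        intro hmem
        have hsub : convexHull ℝ (E \ {a}) ⊆ P := by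
          rw [hPE]; exact convexHull_mono Set.diff_subset
        have h2 := extremePoints_mono' hsub haE hmem
        have := extremePoints_convexHull_subset h2
        exact this.2 rfl
      obtain ⟨f, u, hfa, hfgt⟩ := geometric_hahn_banach_point_closed
        (convex_convexHull ℝ _) (hAfin.isClosed_convexHull ℝ) ha_not
      set c₁ := f ((1:ℝ), (0:ℝ)) with hc₁
      set c₂ := f ((0:ℝ), (1:ℝ)) with hc₂
      have hflin : ∀ y : ℝ × ℝ, f y = c₁ * y.1 + c₂ * y.2 := by
        intro y
        have hy : y = y.1 • ((1:ℝ), (0:ℝ)) + y.2 • ((0:ℝ), (1:ℝ)) := by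
          apply Prod.ext <;> simp
        conv_lhs => rw [hy]
        rw [map_add, map_smul, map_smul, smul_eq_mul, smul_eq_mul, hc₁, hc₂]
        ring
      have hfApos : ∀ x ∈ E \ {a}, f a < f x := fun x hx =>
        hfa.trans (hfgt x (subset_convexHull ℝ _ hx))
      set alpha : ℝ × ℝ → ℝ := fun y => c₁ * (y.1 - a.1) + c₂ * (y.2 - a.2) with halpha
      set beta : ℝ × ℝ → ℝ := fun y => c₁ * (y.2 - a.2) - c₂ * (y.1 - a.1) with hbeta
      have halpha_eq : ∀ x, alpha x = f x - f a := by
        intro x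
        rw [halpha, hflin x, hflin a]; ring
      have halpha_pos : ∀ x ∈ E \ {a}, 0 < alpha x := by
        intro x hx
        rw [halpha_eq]
        have := hfApos x hx
        linarith
      set phi : ℝ × ℝ → ℝ := fun y => beta y / alpha y with hphi
      obtain ⟨b, hbA, hbmax⟩ := Set.exists_max_image (E \ {a}) phi hAfin hAne
      have hbE : b ∈ E := hbA.1
      have hba : b ≠ a := by
        intro hh; exact hbA.2 (by simp [hh])
      have hN : 0 < c₁^2 + c₂^2 := by
        rcases eq_or_ne (c₁^2 + c₂^2) 0 with h0 | h0
        · exfalso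
          have hc1 : c₁ = 0 := by nlinarith [sq_nonneg c₁, sq_nonneg c₂]
          have hc2 : c₂ = 0 := by nlinarith [sq_nonneg c₁, sq_nonneg c₂]
          have := halpha_pos b hbA
          rw [halpha, hc1, hc2] at this
          simp at this
        · exact lt_of_le_of_ne (by positivity) (Ne.symm h0)
      have hkey : ∀ x ∈ E, x ≠ a → x ≠ b → cr (b - a) (x - a) < 0 := by
        intro x hxE hxa hxb
        have hxA : x ∈ E \ {a} := ⟨hxE, by simpa using hxa⟩
        have h1 : phi x ≤ phi b := hbmax x hxA
        have hne0 : cr (x - a) (b - a) ≠ 0 := fun h0 =>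
          extreme_not_collinear haE hxE hbE hxa hba (Ne.symm hxb) h0
        have hax : 0 < alpha x := halpha_pos x hxA
        have hab : 0 < alpha b := halpha_pos b hbA
        have hident : (c₁^2 + c₂^2) * cr (x - a) (b - a)
            = alpha x * beta b - beta x * alpha b := by
          simp only [cr, halpha, hbeta, Prod.fst_sub, Prod.snd_sub]
          ring
        have h2 : beta x * alpha b ≤ beta b * alpha x := by
          have h1' := h1
          simp only [hphi] at h1'
          exact (div_le_div_iff₀ hax hab).1 h1'
        have h3 : 0 < cr (x - a) (b - a) := by
          rcases lt_trichotomy (cr (x - a) (b - a)) 0 with h | h | h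
          · exfalso; nlinarith
          · exact absurd h hne0
          · exact h
        have hanti : cr (b - a) (x - a) = -cr (x - a) (b - a) := by
          simp only [cr, Prod.fst_sub, Prod.snd_sub]; ring
        rw [hanti]; linarith
      set l : ℝ × ℝ → ℝ := fun y => cr (b - a) y with hl
      set M : ℝ := cr (b - a) a with hM
      have hla : l a = M := rfl
      have hlb : l b = M := by simp only [hl, hM, cr, Prod.fst_sub, Prod.snd_sub]; ring
      have hlsub : ∀ y, cr (b - a) (y - a) = l y - M := by
        intro y; simp only [hl, hM, cr, Prod.fst_sub, Prod.snd_sub]; ring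
      have hlt : ∀ x ∈ E, x ≠ a → x ≠ b → l x < M := by
        intro x h1 h2 h3
        have := hkey x h1 h2 h3
        rw [hlsub] at this
        linarith
      have hle : ∀ x ∈ E, l x ≤ M := by
        intro x hx
        by_cases h1 : x = a
        · rw [h1, hla]
        by_cases h2 : x = b
        · rw [h2, hlb]
        · exact (hlt x hx h1 h2).le
      have hlin : IsLinearMap ℝ l := by
        constructor
        · intro p q; simp only [hl, cr, Prod.fst_add, Prod.snd_add]; ring
        · intro c p
          simp only [hl, cr, Prod.smul_fst, Prod.smul_snd, smul_eq_mul]; ring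
      have hlP : ∀ y ∈ P, l y ≤ M := by
        intro y hy
        have hsub : P ⊆ {w | l w ≤ M} := by
          rw [hPE]
          exact convexHull_min (fun x hx => hle x hx) (convex_halfSpace_le hlin M)
        exact hsub hy
      have h0P : (0:ℝ×ℝ) ∈ P := by
        have h := hPconv (hEP haE) (hnegmem a (hEP haE))
          (le_of_lt one_half_pos) (le_of_lt one_half_pos) (by norm_num)
        have heq : (1/2 : ℝ) • a + (1/2 : ℝ) • (-a) = (0:ℝ×ℝ) := by module
        rwa [heq] at h
      have hl0 : l 0 = 0 := by simp [hl, cr]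
      have hlneg : ∀ y, l (-y) = -l y := by
        intro y; simp only [hl, cr, Prod.fst_neg, Prod.snd_neg]; ring
      have hM0 : 0 < M := by
        have hM0' : 0 ≤ M := by have := hlP 0 h0P; rwa [hl0] at this
        rcases hM0'.lt_or_eq with h | h
        · exact h
        exfalso
        by_cases h1 : -a = a
        · have ha0 : a = 0 := neg_self_zero h1
          by_cases h2 : -b = b
          · exact hba (by rw [neg_self_zero h2, ha0])
          by_cases h3 : -b = a
          · apply hba
            have hb0' : b = 0 := by
              have h3' := h3
              rw [ha0] at h3'
              exact neg_eq_zero.1 h3'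
            rw [hb0', ha0]
          · have := hlt (-b) (hEsymm b hbE) h3 h2
            rw [hlneg, hlb] at this
            linarith
        · by_cases h4 : -a = b
          · have hEab : (E \ {a, b}).Nonempty := by
              rw [Set.diff_nonempty]
              intro hsub
              have hle2 : ({a, b} : Set _).ncard ≤ 2 := by
                have := Set.ncard_insert_le a ({b} : Set _)
                simpa [Set.ncard_singleton] using this
              have := Set.ncard_le_ncard hsub ((Set.finite_singleton b).insert a)
              omega
            obtain ⟨x₀, hx₀⟩ := hEab
            have hx₀E : x₀ ∈ E := hx₀.1
            have hx₀ab : x₀ ≠ a ∧ x₀ ≠ b := by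
              have := hx₀.2
              simp only [Set.mem_insert_iff, Set.mem_singleton_iff, not_or] at this
              exact this
            have l₁ := hlt x₀ hx₀E hx₀ab.1 hx₀ab.2
            have hnx₀a : -x₀ ≠ a := by
              intro hh; apply hx₀ab.2; rw [← h4, ← hh, neg_neg]
            have hnx₀b : -x₀ ≠ b := by
              intro hh; apply hx₀ab.1
              have : x₀ = -b := by rw [← hh, neg_neg]
              rw [this, ← h4, neg_neg]
            have l₂ := hlt (-x₀) (hEsymm x₀ hx₀E) hnx₀a hnx₀b
            rw [hlneg] at l₂
            linarith
          · have l₁ := hlt (-a) (hEsymm a haE) h1 h4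
            rw [hlneg, hla] at l₁
            linarith
      have ha0 : a ≠ 0 := by
        intro hh
        rw [hh] at hla
        rw [hl0] at hla
        linarith
      have hb0 : b ≠ 0 := by
        intro hh
        rw [hh] at hlb
        rw [hl0] at hlb
        linarith
      have hdne : cr a b ≠ 0 := by
        intro h0
        obtain ⟨t, ht⟩ := cr_eq_zero_imp h0 ha0
        have hlbt : l b = t * l a := by
          rw [ht, hlin.map_smul, smul_eq_mul]
        rw [hlb, hla] at hlbt
        have ht1 : (t - 1) * M = 0 := by linarith
        rcases mul_eq_zero.1 ht1 with h | h
        · apply hba; rw [ht, show t = 1 by linarith, one_smul]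
        · linarith
      set xi : ℝ × ℝ → ℝ := fun x => cr x b / cr a b with hxi
      set eta : ℝ × ℝ → ℝ := fun x => cr a x / cr a b with heta
      have hco : ∀ x, (xi x) • a + (eta x) • b = x := fun x => cr_coords hdne x
      have hlx : ∀ x : ℝ × ℝ, l x = (xi x + eta x) * M := by
        intro x
        have h1 : l x = xi x * l a + eta x * l b := by
          conv_lhs => rw [← hco x]
          rw [hlin.map_add, hlin.map_smul, hlin.map_smul, smul_eq_mul, smul_eq_mul]
        rw [hla, hlb] at h1
        rw [h1]; ring
      have hxineg : ∀ x, xi (-x) = -xi x := by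
        intro x
        have h' : cr (-x) b = -cr x b := by
          simp only [cr, Prod.fst_neg, Prod.snd_neg]; ring
        simp only [hxi]
        rw [h', neg_div]
      have hetaneg : ∀ x, eta (-x) = -eta x := by
        intro x
        have h' : cr a (-x) = -cr a x := by
          simp only [cr, Prod.fst_neg, Prod.snd_neg]; ring
        simp only [heta]
        rw [h', neg_div]
      set E' := E \ {a, b, -a, -b} with hE'
      have hmemE' : ∀ x ∈ E', x ∈ E ∧ x ≠ a ∧ x ≠ b ∧ x ≠ -a ∧ x ≠ -b := by
        intro x hx
        refine ⟨hx.1, ?_⟩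
        have := hx.2
        simp only [Set.mem_insert_iff, Set.mem_singleton_iff, not_or] at this
        tauto
      have hnE' : ∀ x ∈ E', -x ∈ E' := by
        intro x hx
        obtain ⟨hxE, hxa, hxb, hxna, hxnb⟩ := hmemE' x hx
        refine ⟨hEsymm x hxE, ?_⟩
        simp only [Set.mem_insert_iff, Set.mem_singleton_iff, not_or]
        refine ⟨?_, ?_, ?_, ?_⟩
        · intro hh; apply hxna; rw [← hh, neg_neg]
        · intro hh; apply hxnb; rw [← hh, neg_neg]
        · intro hh; apply hxa; exact neg_injective hh
        · intro hh; apply hxb; exact neg_injective hh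
      have hsum1 : ∀ x ∈ E', |xi x + eta x| < 1 := by
        intro x hx
        obtain ⟨hxE, hxa, hxb, hxna, hxnb⟩ := hmemE' x hx
        have h1 := hlt x hxE hxa hxb
        rw [hlx] at h1
        have h2 := hlt (-x) (hEsymm x hxE)
          (fun hh => hxna (by rw [← hh, neg_neg])) (fun hh => hxnb (by rw [← hh, neg_neg]))
        rw [hlneg, hlx] at h2
        rw [abs_lt]
        constructor <;> nlinarith
      have hbig1 : ∀ x ∈ E', 1 < |xi x| + |eta x| := by
        intro x hx
        obtain ⟨hxE, hxa, hxb, hxna, hxnb⟩ := hmemE' x hx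
        by_contra hcon
        push_neg at hcon
        have haQ : a ∈ convexHull ℝ ({a, b, -a, -b} : Set (ℝ×ℝ)) :=
          subset_convexHull _ _ (by simp)
        have hbQ : b ∈ convexHull ℝ ({a, b, -a, -b} : Set (ℝ×ℝ)) :=
          subset_convexHull _ _ (by simp)
        have hnaQ : -a ∈ convexHull ℝ ({a, b, -a, -b} : Set (ℝ×ℝ)) :=
          subset_convexHull _ _ (by simp)
        have hnbQ : -b ∈ convexHull ℝ ({a, b, -a, -b} : Set (ℝ×ℝ)) :=
          subset_convexHull _ _ (by simp)
        have hxQ : x ∈ convexHull ℝ ({a, b, -a, -b} : Set (ℝ×ℝ)) := by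
          have := combo_mem (convex_convexHull ℝ _) haQ hnaQ hbQ hnbQ haQ hnaQ
            (A := xi x) (B := eta x) (C := 0) (by rw [abs_zero]; linarith)
          rw [zero_smul, add_zero, hco x] at this
          exact this
        have hsubQ : convexHull ℝ ({a, b, -a, -b} : Set (ℝ×ℝ)) ⊆ P := by
          apply convexHull_min _ hPconv
          intro y hy
          rcases hy with rfl | hy
          · exact hEP haE
          rcases hy with rfl | hy
          · exact hEP hbE
          rcases hy with rfl | hy
          · exact hnegmem a (hEP haE)
          · rw [Set.mem_singleton_iff] at hy; rw [hy]; exact hnegmem b (hEP hbE)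
        have hxext := extremePoints_mono' hsubQ hxE hxQ
        have := extremePoints_convexHull_subset hxext
        rcases this with h | h
        · exact hxa h
        rcases h with h | h
        · exact hxb h
        rcases h with h | h
        · exact hxna h
        · rw [Set.mem_singleton_iff] at h; exact hxnb h
      have hneq : ∀ x ∈ E', xi x ≠ eta x := by
        intro x hx h
        have h1 := hsum1 x hx
        have h2 := hbig1 x hx
        rw [h] at h1 h2
        rw [show eta x + eta x = 2 * eta x by ring, abs_mul, abs_two] at h1
        linarith
      have hcrux : ∀ x ∈ E', xi x < eta x → x + a - b ∈ P := by
        intro x hx hlt'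
        obtain ⟨hxE, hxa, hxb, hxna, hxnb⟩ := hmemE' x hx
        have h1 := hsum1 x hx
        have h2 := hbig1 x hx
        have hxin : xi x < 0 := by
          by_contra hcon
          push_neg at hcon
          have he : 0 ≤ eta x := le_of_lt (lt_of_le_of_lt hcon hlt')
          rw [abs_of_nonneg hcon, abs_of_nonneg he] at h2
          rw [abs_of_nonneg (by linarith)] at h1
          linarith
        have hetp : 0 < eta x := by
          by_contra hcon
          push_neg at hcon
          rw [abs_of_nonpos (le_of_lt hxin), abs_of_nonpos hcon] at h2
          rw [abs_of_nonpos (by linarith)] at h1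
          linarith
        have hdiff : 1 ≤ eta x - xi x := by
          rw [abs_of_neg hxin, abs_of_pos hetp] at h2
          linarith
        obtain ⟨r, hr⟩ := rexists hxin hetp (le_of_lt h1) hdiff
        have hmem := combo_mem hPconv (hEP haE) (hnegmem a (hEP haE)) (hEP hbE)
          (hnegmem b (hEP hbE)) (hEP hxE) (hnegmem x (hEP hxE))
          (A := 1 + r * xi x) (B := r * eta x - 1) (C := 1 - r) hr
        have gen : ∀ (ξ0 η0 : ℝ) (xx : ℝ×ℝ), ξ0 • a + η0 • b = xx →
            (1 + r*ξ0) • a + (r*η0 - 1) • b + (1-r) • xx = xx + a - b := by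
          intro ξ0 η0 xx hxx
          rw [← hxx]; module
        rw [gen (xi x) (eta x) x (hco x)] at hmem
        exact hmem
      have hcrux2 : ∀ x ∈ E', eta x < xi x → x - a + b ∈ P := by
        intro x hx hlt'
        have hnx : -x ∈ E' := hnE' x hx
        have h := hcrux (-x) hnx (by rw [hxineg, hetaneg]; linarith)
        have h2 := hnegmem _ h
        rwa [show -(-x + a - b) = x - a + b by module] at h2
      set v : ℝ × ℝ := (2⁻¹ : ℝ) • (b - a) with hv
      set mm : ℝ × ℝ := (2⁻¹ : ℝ) • (a + b) with hmm
      have hma : mm - v = a := by rw [hv, hmm]; module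
      have hmb : mm + v = b := by rw [hv, hmm]; module
      set sh : ℝ × ℝ → ℝ × ℝ := fun x => if xi x < eta x then x - v else x + v with hsh
      set W : Set (ℝ × ℝ) := insert mm (insert (-mm) (sh '' E')) with hW
      have hmmW : mm ∈ W := Set.mem_insert _ _
      have hnmmW : -mm ∈ W := Set.mem_insert_of_mem _ (Set.mem_insert _ _)
      have hshW : ∀ x ∈ E', sh x ∈ W := fun x hx =>
        Set.mem_insert_of_mem _ (Set.mem_insert_of_mem _ ⟨x, hx, rfl⟩)
      have hsh_mem : ∀ x ∈ E', sh x + v ∈ P ∧ sh x - v ∈ P := by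
        intro x hx
        by_cases hc : xi x < eta x
        · have h1 : sh x = x - v := by simp only [hsh, if_pos hc]
          constructor
          · rw [h1, sub_add_cancel]; exact hEP (hmemE' x hx).1
          · rw [h1, show x - v - v = x + a - b by rw [hv]; module]
            exact hcrux x hx hc
        · have hc' : eta x < xi x :=
            lt_of_le_of_ne (not_lt.1 hc) (Ne.symm (hneq x hx))
          have h1 : sh x = x + v := by simp only [hsh, if_neg hc]
          constructor
          · rw [h1, show x + v + v = x - a + b by rw [hv]; module]
            exact hcrux2 x hx hc'
          · rw [h1, add_sub_cancel_right]; exact hEP (hmemE' x hx).1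
      have hWsub : ∀ w ∈ W, w + v ∈ P ∧ w - v ∈ P := by
        intro w hw
        rcases hw with rfl | hw
        · rw [hmb, hma]; exact ⟨hEP hbE, hEP haE⟩
        rcases hw with rfl | hw
        · constructor
          · rw [show -mm + v = -(mm - v) by module, hma]
            exact hnegmem a (hEP haE)
          · rw [show -mm - v = -(mm + v) by module, hmb]
            exact hnegmem b (hEP hbE)
        · obtain ⟨x, hx, rfl⟩ := hw
          exact hsh_mem x hx
      have hvmem : v ∈ ({-v, v} : Set (ℝ×ℝ)) := by simp
      have hnvmem : -v ∈ ({-v, v} : Set (ℝ×ℝ)) := by simp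
      have hEsub : E ⊆ W + ({-v, v} : Set (ℝ×ℝ)) := by
        intro y hy
        by_cases h1 : y = a
        · have := Set.add_mem_add hmmW hnvmem
          rwa [show mm + -v = y by rw [h1, ← hma, sub_eq_add_neg]] at this
        by_cases h2 : y = b
        · have := Set.add_mem_add hmmW hvmem
          rwa [show mm + v = y by rw [h2, hmb]] at this
        by_cases h3 : y = -a
        · have := Set.add_mem_add hnmmW hvmem
          rwa [show -mm + v = y by rw [h3, show -mm + v = -(mm - v) by module, hma]] at this
        by_cases h4 : y = -b
        · have := Set.add_mem_add hnmmW hnvmem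
          rwa [show -mm + -v = y by rw [h4, show -mm + -v = -(mm + v) by module, hmb]] at this
        · have hyE' : y ∈ E' := by
            refine ⟨hy, ?_⟩
            simp only [Set.mem_insert_iff, Set.mem_singleton_iff, not_or]
            exact ⟨h1, h2, h3, h4⟩
          by_cases hc : xi y < eta y
          · have := Set.add_mem_add (hshW y hyE') hvmem
            rwa [show sh y + v = y by simp only [hsh, if_pos hc]; module] at this
          · have := Set.add_mem_add (hshW y hyE') hnvmem
            rwa [show sh y + -v = y by simp only [hsh, if_neg hc]; module] at this
      have hPeq : P = convexHull ℝ W + segment ℝ (-v) v := by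
        rw [← convexHull_pair, ← convexHull_add]
        apply Set.Subset.antisymm
        · rw [hPE]; exact convexHull_mono hEsub
        · apply convexHull_min _ hPconv
          rintro z ⟨w, hw, e, he, rfl⟩
          simp only [Set.mem_insert_iff, Set.mem_singleton_iff] at he
          rcases he with rfl | rfl
          · have := (hWsub w hw).2
            rwa [sub_eq_add_neg] at this
          · exact (hWsub w hw).1
      have hshneg : ∀ x ∈ E', sh (-x) = -sh x := by
        intro x hx
        by_cases hc : xi x < eta x
        · have hnc : ¬ (xi (-x) < eta (-x)) := by
            rw [hxineg, hetaneg, not_lt]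
            linarith
          simp only [hsh, if_pos hc, if_neg hnc]
          module
        · have hc' : eta x < xi x :=
            lt_of_le_of_ne (not_lt.1 hc) (Ne.symm (hneq x hx))
          have hnc : xi (-x) < eta (-x) := by
            rw [hxineg, hetaneg]
            linarith
          simp only [hsh, if_neg hc, if_pos hnc]
          module
      have hWsym : -W = W := by
        have hmmv : ∀ w ∈ W, -w ∈ W := by
          intro w hw
          rcases hw with rfl | hw
          · exact hnmmW
          rcases hw with rfl | hw
          · rw [neg_neg]; exact hmmW
          · obtain ⟨x, hx, rfl⟩ := hw
            rw [← hshneg x hx]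
            exact hshW (-x) (hnE' x hx)
        apply Set.Subset.antisymm
        · intro z hz
          rw [Set.mem_neg] at hz
          have := hmmv _ hz
          rwa [neg_neg] at this
        · intro z hz
          rw [Set.mem_neg]
          exact hmmv z hz
      have hE'fin : E'.Finite := hEfin.subset Set.diff_subset
      have hWfin : W.Finite := ((hE'fin.image sh).insert _).insert _
      have hQsym : -(convexHull ℝ W) = convexHull ℝ W := by
        rw [← convexHull_neg, hWsym]
      have hQne : (convexHull ℝ W).Nonempty := ⟨mm, subset_convexHull _ _ hmmW⟩
      have hdistab : a ≠ -a ∧ b ≠ -b ∧ a ≠ -b ∧ b ≠ -a := by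
        refine ⟨?_, ?_, ?_, ?_⟩
        · intro hh
          have := hla
          rw [hh, hlneg, hla] at this
          linarith
        · intro hh
          have := hlb
          rw [hh, hlneg, hlb] at this
          linarith
        · intro hh
          have := hla
          rw [hh, hlneg, hlb] at this
          linarith
        · intro hh
          have := hlb
          rw [hh, hlneg, hla] at this
          linarith
      have h4dist : ({a, b, -a, -b} : Set (ℝ×ℝ)).ncard = 4 := by
        have hf1 : ({-a, -b} : Set (ℝ×ℝ)).Finite := (Set.finite_singleton (-b)).insert (-a)
        have hf2 : ({b, -a, -b} : Set (ℝ×ℝ)).Finite := hf1.insert b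
        rw [Set.ncard_insert_of_notMem (by
          simp only [Set.mem_insert_iff, Set.mem_singleton_iff, not_or]
          exact ⟨hba.symm, hdistab.1, hdistab.2.2.1⟩) hf2]
        rw [Set.ncard_insert_of_notMem (by
          simp only [Set.mem_insert_iff, Set.mem_singleton_iff, not_or]
          exact ⟨hdistab.2.2.2, hdistab.2.1⟩) hf1]
        rw [Set.ncard_pair (fun hh => hba (neg_injective hh).symm)]
      have h4sub : ({a, b, -a, -b} : Set (ℝ×ℝ)) ⊆ E := by
        intro y hy
        rcases hy with rfl | hy
        · exact haE
        rcases hy with rfl | hy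
        · exact hbE
        rcases hy with rfl | hy
        · exact hEsymm a haE
        · rw [Set.mem_singleton_iff] at hy; rw [hy]; exact hEsymm b hbE
      have hE4 : 4 ≤ E.ncard := h4dist ▸ Set.ncard_le_ncard h4sub hEfin
      have hE'card : E'.ncard = E.ncard - 4 := by
        rw [hE', Set.ncard_diff h4sub (((Set.finite_singleton (-b)).insert (-a)).insert b |>.insert a), h4dist]
      have hEcard : E.ncard ≤ n + 1 := le_trans (Set.ncard_le_ncard hES hSfin) hScard
      have hWcard : W.ncard ≤ n := by
        have h1 : (sh '' E').ncard ≤ E'.ncard := Set.ncard_image_le hE'fin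
        have h2 := Set.ncard_insert_le (-mm) (sh '' E')
        have h3 := Set.ncard_insert_le mm (insert (-mm) (sh '' E'))
        rw [hW]
        omega
      obtain ⟨k, w, hwrep⟩ := IH W hWfin hWcard (convexHull ℝ W) rfl hQsym hQne
      refine ⟨k + 1, Fin.snoc w v, ?_⟩
      rw [hPeq, hwrep, Fin.sum_univ_castSucc]
      simp [Fin.snoc_castSucc, Fin.snoc_last]

/-- Every (nonempty) centrally symmetric convex polygon in the plane is a finite Minkowski
sum of centrally symmetric segments. -/
theorem symmetric_polygon_is_zonotope
    (S : Set (ℝ × ℝ)) (hS : S.Finite)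
    (P : Set (ℝ × ℝ)) (hP : P = convexHull ℝ S)
    (hsym : -P = P) (hne : P.Nonempty) :
    ∃ (n : ℕ) (v : Fin n → ℝ × ℝ),
      P = ∑ i : Fin n, segment ℝ (-(v i)) (v i) := by
  exact key_ind S.ncard S hS le_rfl P hP hsym hne
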